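/- For multidegree d = (d_1,...,d_p) ∈ Z_{≥0}^p with d_i > 0 for some 1 ≤ i ≤ p-1, every monomial of k[u_1,...,u_p,α] of multidegree d lies in the initial algebra in(A) (for any monomial order with α ≺ u_p), and the number of such monomials is d_p + 1. -/

import Mathlib

/-- The generating set `{u_1,…,u_{p-1}, u_p + α, u_1α,…,u_pα}` of the subalgebra
`A ⊆ k[u_1,…,u_p,α]` (variables 0-indexed, `X ⟨p⟩` is `α`). -/
noncomputable def genSet (k : Type*) [Field k] (p : ℕ) :
    Set (MvPolynomial (Fin (p + 1)) k) :=
  {f | ∃ i : ℕ, ∃ h : i < p - 1, f = MvPolynomial.X ⟨i, by omega⟩} ∪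
    {MvPolynomial.X ⟨p - 1, by omega⟩ + MvPolynomial.X ⟨p, by omega⟩} ∪
    {f | ∃ i : ℕ, ∃ h : i < p,
      f = MvPolynomial.X ⟨i, by omega⟩ * MvPolynomial.X ⟨p, by omega⟩}

/-- The `ℤ^p`-multidegree of an exponent vector on `k[u_1,…,u_p,α]`:
`deg u_i = ε_i` and `deg α = ε_p`. -/
def Dmap (p : ℕ) (σ : Fin (p + 1) →₀ ℕ) : Fin p → ℕ := fun i =>
  if h : (i : ℕ) < p - 1 then σ ⟨(i : ℕ), by omega⟩
  else σ ⟨p - 1, by omega⟩ + σ ⟨p, by omega⟩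

open MvPolynomial

lemma aux_mem (k : Type*) [Field k] (p : ℕ) (hp : 3 ≤ p) (i : ℕ) (hi : i < p - 1) :
    ∀ j : ℕ, X (⟨i, by omega⟩ : Fin (p+1)) * X (⟨p, by omega⟩ : Fin (p+1)) ^ j ∈
      Algebra.adjoin k (genSet k p) := by
  intro j
  induction j using Nat.strong_induction_on with
  | _ j ih =>
    match j with
    | 0 =>
      have hx : X (⟨i, by omega⟩ : Fin (p+1)) ∈ genSet k p := Or.inl (Or.inl ⟨i, hi, rfl⟩)
      simpa using Algebra.subset_adjoin hx
    | 1 =>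
      have hx : X (⟨i, by omega⟩ : Fin (p+1)) * X (⟨p, by omega⟩ : Fin (p+1)) ∈ genSet k p :=
        Or.inr ⟨i, by omega, rfl⟩
      simpa using Algebra.subset_adjoin hx
    | (j+2) =>
      have key : (X (⟨i, by omega⟩ : Fin (p+1)) : MvPolynomial (Fin (p+1)) k) *
            X (⟨p, by omega⟩ : Fin (p+1)) ^ (j+2) =
          (X (⟨i, by omega⟩ : Fin (p+1)) * X (⟨p, by omega⟩ : Fin (p+1)) ^ (j+1)) *
            (X (⟨p-1, by omega⟩ : Fin (p+1)) + X (⟨p, by omega⟩ : Fin (p+1)))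
          - (X (⟨i, by omega⟩ : Fin (p+1)) * X (⟨p, by omega⟩ : Fin (p+1)) ^ j) *
            (X (⟨p-1, by omega⟩ : Fin (p+1)) * X (⟨p, by omega⟩ : Fin (p+1))) := by ring
      have hg1 : X (⟨p-1, by omega⟩ : Fin (p+1)) + X (⟨p, by omega⟩ : Fin (p+1)) ∈ genSet k p :=
        Or.inl (Or.inr rfl)
      have hg2 : X (⟨p-1, by omega⟩ : Fin (p+1)) * X (⟨p, by omega⟩ : Fin (p+1)) ∈ genSet k p :=
        Or.inr ⟨p-1, by omega, rfl⟩
      rw [key]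
      exact sub_mem
        (mul_mem (ih (j+1) (by omega)) (Algebra.subset_adjoin hg1))
        (mul_mem (ih j (by omega)) (Algebra.subset_adjoin hg2))

lemma aux_smul {M : Type*} [AddCommMonoid M] (r : M → M → Prop) [IsTrans M r]
    (hadd : ∀ a b c, r a b → r (a + c) (b + c)) {x y : M} (h : r x y) :
    ∀ n : ℕ, r ((n+1) • x) ((n+1) • y) := by
  intro n
  induction n with
  | zero => simpa
  | succ n ih =>
    have h1 : r ((n+1) • x + x) ((n+1) • y + x) := hadd _ _ _ ih
    have h2 : r ((n+1) • y + x) ((n+1) • y + y) := by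
      have := hadd _ _ ((n+1) • y) h
      rwa [add_comm x, add_comm y] at this
    have h3 := IsTrans.trans _ _ _ h1 h2
    simpa [succ_nsmul] using h3

lemma aux_coeff {k : Type*} [Field k] {m : ℕ} (a b : Fin m) (n : ℕ) (τ : Fin m →₀ ℕ) :
    coeff τ ((X a + X b : MvPolynomial (Fin m) k) ^ n) =
      ∑ j ∈ Finset.range (n+1),
        if Finsupp.single a j + Finsupp.single b (n - j) = τ then ((n.choose j : k)) else 0 := by
  classical
  rw [Commute.add_pow (Commute.all _ _) n, coeff_sum]
  refine Finset.sum_congr rfl fun j _ => ?_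
  rw [X_pow_eq_monomial, X_pow_eq_monomial, monomial_mul, one_mul, ← C_eq_coe_nat, C_apply,
    monomial_mul, add_zero, one_mul, coeff_monomial]

lemma part2 (p : ℕ) (hp : 3 ≤ p) (d : Fin p → ℕ) :
    Set.ncard {σ : Fin (p + 1) →₀ ℕ | Dmap p σ = d} = d ⟨p - 1, by omega⟩ + 1 := by
  classical
  have hp1 : p - 1 < p + 1 := by omega
  have hpplt : p < p + 1 := by omega
  set bb := d ⟨p - 1, by omega⟩ with hbb
  set F : ℕ → (Fin (p+1) →₀ ℕ) := fun j =>
    Finsupp.equivFunOnFinite.symm (fun i =>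
      if h : (i : ℕ) < p - 1 then d ⟨(i : ℕ), by omega⟩
      else if (i : ℕ) = p - 1 then bb - j else j) with hFdef
  have hF : ∀ j i, F j i = if h : (i : ℕ) < p - 1 then d ⟨(i : ℕ), by omega⟩
      else if (i : ℕ) = p - 1 then bb - j else j := fun j i =>
    congrFun (Finsupp.coe_equivFunOnFinite_symm _) i
  have hDm : ∀ (σ : Fin (p+1) →₀ ℕ) (i : Fin p), Dmap p σ i =
      if (i : ℕ) < p - 1 then σ ⟨(i : ℕ), by omega⟩
      else σ ⟨p - 1, hp1⟩ + σ ⟨p, hpplt⟩ := by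
    intro σ i
    by_cases h : (i : ℕ) < p - 1
    · rw [Dmap, dif_pos h, if_pos h]
    · rw [Dmap, dif_neg h, if_neg h]
  have hv1 : ∀ j, F j ⟨p - 1, hp1⟩ = bb - j := by
    intro j
    rw [hF, dif_neg (by simp), if_pos (by simp)]
  have hv2 : ∀ j, F j ⟨p, hpplt⟩ = j := by
    intro j
    rw [hF, dif_neg (by simp), if_neg (by simp; omega)]
  have hset : {σ : Fin (p + 1) →₀ ℕ | Dmap p σ = d} = ↑((Finset.Iic bb).image F) := by
    ext σ
    simp only [Set.mem_setOf_eq, Finset.coe_image, Set.mem_image, Finset.mem_coe,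
      Finset.mem_Iic]
    constructor
    · intro hσ
      have hbsum : σ ⟨p - 1, hp1⟩ + σ ⟨p, hpplt⟩ = bb := by
        have h1 := (hDm σ ⟨p - 1, by omega⟩).symm.trans (congrFun hσ ⟨p - 1, by omega⟩)
        rwa [if_neg (by simp)] at h1
      refine ⟨σ ⟨p, hpplt⟩, by omega, ?_⟩
      ext i
      rw [hF]
      by_cases h : (i : ℕ) < p - 1
      · rw [dif_pos h]
        have h1 := (hDm σ ⟨(i : ℕ), by omega⟩).symm.trans (congrFun hσ ⟨(i : ℕ), by omega⟩)
        rw [if_pos (by simpa using h)] at h1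
        rw [← h1]
      · rw [dif_neg h]
        by_cases h2 : (i : ℕ) = p - 1
        · rw [if_pos h2, show i = ⟨p - 1, hp1⟩ from Fin.ext (by simpa using h2)]
          omega
        · rw [if_neg h2, show i = ⟨p, hpplt⟩ from Fin.ext (by have := i.isLt; simp; omega)]
    · rintro ⟨j, hj, rfl⟩
      funext i
      rw [hDm]
      by_cases h : (i : ℕ) < p - 1
      · rw [if_pos h, hF, dif_pos (by simpa using h)]
      · rw [if_neg h, hv1, hv2,
          show i = ⟨p - 1, by omega⟩ from Fin.ext (by have := i.isLt; simp; omega),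
          show d ⟨p - 1, by omega⟩ = bb from hbb.symm]
        omega
  rw [hset, Set.ncard_coe_finset, Finset.card_image_of_injOn, Nat.card_Iic]
  intro x _ y _ hxy
  have h1 := DFunLike.congr_fun hxy ⟨p, hpplt⟩
  rwa [hv2, hv2] at h1



/-- for any multidegree `d` with `d_i > 0` for some `i ≤ p-1`, every
monomial of multidegree `d` is the leading monomial of an element of `A` (i.e. lies in
the initial algebra `in(A)`, for any monomial order with `α ≺ u_p`), and the number of
monomials of multidegree `d` is `d_p + 1`. -/
theorem stmt9 (k : Type*) [Field k] (p : ℕ) (hp : 3 ≤ p)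
    (r : (Fin (p + 1) →₀ ℕ) → (Fin (p + 1) →₀ ℕ) → Prop) [IsStrictTotalOrder _ r]
    (hadd : ∀ a b c, r a b → r (a + c) (b + c))
    (halpha : r (Finsupp.single (⟨p, by omega⟩ : Fin (p + 1)) 1)
      (Finsupp.single (⟨p - 1, by omega⟩ : Fin (p + 1)) 1))
    (d : Fin p → ℕ) (hd : ∃ i : Fin p, (i : ℕ) < p - 1 ∧ 0 < d i) :
    (∀ σ : Fin (p + 1) →₀ ℕ, Dmap p σ = d →
      ∃ f ∈ Algebra.adjoin k (genSet k p), f ≠ 0 ∧ σ ∈ f.support ∧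
        ∀ τ ∈ f.support, τ ≠ σ → r τ σ) ∧
    Set.ncard {σ : Fin (p + 1) →₀ ℕ | Dmap p σ = d} = d ⟨p - 1, by omega⟩ + 1 := by
  classical
  have hp1 : p - 1 < p + 1 := by omega
  have hpplt : p < p + 1 := by omega
  set pm1 : Fin (p+1) := ⟨p-1, hp1⟩ with hpm1def
  set pp : Fin (p+1) := ⟨p, hpplt⟩ with hppdef
  have hne : pm1 ≠ pp := by
    simp only [hpm1def, hppdef, Ne, Fin.mk.injEq]; omega
  have hDmap : ∀ (σ : Fin (p+1) →₀ ℕ) (i : Fin p),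
      Dmap p σ i = if (i : ℕ) < p - 1 then σ ⟨(i : ℕ), by omega⟩ else σ pm1 + σ pp := by
    intro σ i
    simp only [Dmap]
    by_cases h : (i : ℕ) < p - 1
    · rw [dif_pos h, if_pos h]
    · rw [dif_neg h, if_neg h]
  have hr : ∀ n : ℕ, 0 < n → r (Finsupp.single pp n) (Finsupp.single pm1 n) := by
    intro n hn
    obtain ⟨m, rfl⟩ : ∃ m, n = m + 1 := ⟨n - 1, by omega⟩
    have := aux_smul r hadd halpha m
    simpa [Finsupp.smul_single] using this
  constructor
  · -- part 1
    intro σ hσ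
    obtain ⟨i0, hi0, hd0⟩ := hd
    have hi0p : (i0 : ℕ) < p + 1 := by omega
    set i0' : Fin (p+1) := ⟨i0, hi0p⟩ with hi0'def
    have hi0pm1 : i0' ≠ pm1 := by simp only [hi0'def, hpm1def, Ne, Fin.mk.injEq]; omega
    have hi0pp : i0' ≠ pp := by simp only [hi0'def, hppdef, Ne, Fin.mk.injEq]; omega
    have hσpos : 0 < σ i0' := by
      have h1 := (hDmap σ i0).symm.trans (congrFun hσ i0)
      rw [if_pos hi0] at h1
      exact lt_of_lt_of_eq hd0 h1.symm
    set a := σ pp with ha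
    set b := σ pm1 with hb
    set μ : Fin (p+1) →₀ ℕ :=
      Finsupp.equivFunOnFinite.symm (fun i => if i = pm1 then 0 else σ i) with hμdef
    have hμ : ∀ i, μ i = if i = pm1 then 0 else σ i := fun i =>
      congrFun (Finsupp.coe_equivFunOnFinite_symm _) i
    set ν : Fin (p+1) →₀ ℕ :=
      Finsupp.equivFunOnFinite.symm
        (fun i => if i = pm1 then 0 else if i = pp then 0 else
          if i = i0' then σ i - 1 else σ i) with hνdef
    have hν : ∀ i, ν i = if i = pm1 then 0 else if i = pp then 0 else
        if i = i0' then σ i - 1 else σ i := fun i =>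
      congrFun (Finsupp.coe_equivFunOnFinite_symm _) i
    set g : MvPolynomial (Fin (p+1)) k := (X pm1 + X pp) ^ b with hgdef
    set f : MvPolynomial (Fin (p+1)) k := monomial μ 1 * g with hfdef
    have hgmem : g ∈ Algebra.adjoin k (genSet k p) := by
      have hx : (X pm1 + X pp : MvPolynomial (Fin (p+1)) k) ∈ genSet k p :=
        Or.inl (Or.inr rfl)
      exact pow_mem (Algebra.subset_adjoin hx) b
    have hνmem : (monomial ν 1 : MvPolynomial (Fin (p+1)) k) ∈ Algebra.adjoin k (genSet k p) := by
      rw [monomial_eq, map_one, one_mul]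
      refine Subalgebra.prod_mem _ fun n hn => ?_
      have hn0 : ν n ≠ 0 := Finsupp.mem_support_iff.mp hn
      have hnval : (n : ℕ) < p - 1 := by
        have h1 : n ≠ pm1 := by rintro rfl; rw [hν] at hn0; simp at hn0
        have h2 : n ≠ pp := by
          rintro rfl
          rw [hν, if_neg (Ne.symm hne), if_pos rfl] at hn0
          exact hn0 rfl
        have h3 : (n : ℕ) ≠ p - 1 := fun h => h1 (Fin.ext h)
        have h4 : (n : ℕ) ≠ p := fun h => h2 (Fin.ext h)
        have := n.isLt; omega
      have hx : (X n : MvPolynomial (Fin (p+1)) k) ∈ genSet k p :=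
        Or.inl (Or.inl ⟨(n : ℕ), hnval, by rw [Fin.eta]⟩)
      exact pow_mem (Algebra.subset_adjoin hx) _
    have hμmem : (monomial μ 1 : MvPolynomial (Fin (p+1)) k) ∈ Algebra.adjoin k (genSet k p) := by
      have hexp : (Finsupp.single i0' 1 + Finsupp.single pp a + ν : Fin (p+1) →₀ ℕ) = μ := by
        ext i
        simp only [Finsupp.add_apply, Finsupp.single_apply, hν, hμ]
        rcases eq_or_ne i pm1 with h1 | h1
        · subst h1
          rw [if_neg hi0pm1, if_neg (Ne.symm hne), if_pos rfl, if_pos rfl]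
          rfl
        · rcases eq_or_ne i pp with h2 | h2
          · subst h2
            rw [if_neg hi0pp, if_pos rfl, if_neg (Ne.symm hne), if_pos rfl,
              if_neg (Ne.symm hne)]
            omega
          · rcases eq_or_ne i i0' with h3 | h3
            · subst h3
              rw [if_pos rfl, if_neg (Ne.symm hi0pp), if_neg hi0pm1, if_neg hi0pp,
                if_pos rfl, if_neg hi0pm1]
              omega
            · rw [if_neg (Ne.symm h3), if_neg (Ne.symm h2), if_neg h1, if_neg h2,
                if_neg h3, if_neg h1]
              omega
      have heq : (monomial μ 1 : MvPolynomial (Fin (p+1)) k) =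
          (X i0' * X pp ^ a) * monomial ν 1 := by
        rw [show (X i0' : MvPolynomial (Fin (p+1)) k) = monomial (Finsupp.single i0' 1) 1
            from rfl,
          X_pow_eq_monomial, monomial_mul, monomial_mul, one_mul, one_mul, hexp]
      rw [heq]
      exact mul_mem (aux_mem k p hp i0 hi0 a) hνmem
    have hfmem : f ∈ Algebra.adjoin k (genSet k p) := mul_mem hμmem hgmem
    have hσeq : σ = μ + Finsupp.single pm1 b := by
      ext i
      rw [Finsupp.add_apply, hμ, Finsupp.single_apply]
      rcases eq_or_ne i pm1 with h1 | h1
      · subst h1; rw [if_pos rfl, if_pos rfl]; omega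
      · rw [if_neg h1, if_neg (fun h => h1 h.symm), add_zero]
    have hgcoeffb : coeff (Finsupp.single pm1 b) g = 1 := by
      rw [hgdef, aux_coeff]
      rw [Finset.sum_eq_single_of_mem b (Finset.self_mem_range_succ b)]
      · rw [Nat.sub_self, Finsupp.single_zero, add_zero, if_pos rfl, Nat.choose_self,
          Nat.cast_one]
      · intro j hj hjb
        rw [if_neg]
        intro h
        have h2 := DFunLike.congr_fun h pp
        rw [Finsupp.add_apply, Finsupp.single_apply, Finsupp.single_apply,
          Finsupp.single_apply, if_neg hne, if_pos rfl, if_neg hne, zero_add] at h2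
        have := Finset.mem_range.mp hj
        omega
    have hσcoeff : coeff σ f = 1 := by
      rw [hσeq, hfdef, coeff_monomial_mul, hgcoeffb, mul_one]
    have hσsupp : σ ∈ f.support :=
      MvPolynomial.mem_support_iff.mpr (by rw [hσcoeff]; exact one_ne_zero)
    have hfne : f ≠ 0 := by
      intro h
      rw [h] at hσsupp
      simp at hσsupp
    refine ⟨f, hfmem, hfne, hσsupp, ?_⟩
    intro τ hτ hτne
    rw [hfdef] at hτ
    have hsub := MvPolynomial.support_mul _ _ hτ
    rw [Finset.mem_add] at hsub
    obtain ⟨x, hx, y, hy, hxy⟩ := hsub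
    rw [support_monomial, if_neg one_ne_zero, Finset.mem_singleton] at hx
    subst hx
    have hyc := MvPolynomial.mem_support_iff.mp hy
    rw [hgdef, aux_coeff] at hyc
    obtain ⟨j, hjmem, hjne⟩ := Finset.exists_ne_zero_of_sum_ne_zero hyc
    have hjb : j ≤ b := Nat.lt_succ_iff.mp (Finset.mem_range.mp hjmem)
    have hyeq : Finsupp.single pm1 j + Finsupp.single pp (b - j) = y := by
      by_contra hcon
      rw [if_neg hcon] at hjne
      exact hjne rfl
    have hjltb : j < b := by
      refine lt_of_le_of_ne hjb fun hjb' => hτne ?_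
      subst hjb'
      rw [Nat.sub_self, Finsupp.single_zero, add_zero] at hyeq
      rw [← hxy, ← hyeq, hσeq]
    have hsingle : Finsupp.single pm1 b = Finsupp.single pm1 j + Finsupp.single pm1 (b - j) := by
      rw [← Finsupp.single_add]
      congr 1
      omega
    have hr' := hadd _ _ (μ + Finsupp.single pm1 j) (hr (b - j) (by omega))
    have hτeq2 : τ = Finsupp.single pp (b - j) + (μ + Finsupp.single pm1 j) := by
      rw [← hxy, ← hyeq]; abel
    have hσeq2 : σ = Finsupp.single pm1 (b - j) + (μ + Finsupp.single pm1 j) := by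
      rw [hσeq, hsingle]; abel
    rw [hτeq2, hσeq2]
    exact hr'
  · exact part2 p hp d
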